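/- For every m ≥ 0 and every m-box B over an interval J ⊆ I, the closure of B in Î is an m-box over the closure of J, all of whose constituent arcs are closed arcs. In particular, the maximal m-box over a closed interval is a closed subset of Î. -/

import Mathlib

open Set MeasureTheory ENNReal Topology

noncomputable section

namespace Tent

/-- The core interval `I = [0,1]`. -/
def I : Set ℝ := Set.Icc 0 1

/-- The core tent map of slope `s`, `f(x) = min(s·x + 2 − s, s·(1 − x))`. -/
def f (s : ℝ) (x : ℝ) : ℝ := min (s * x + 2 - s) (s * (1 - x))

/-- The critical point `c = 1 − 1/s`. -/
def c (s : ℝ) : ℝ := 1 - 1 / s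

/-- The post-critical set `PC = {c, f(c), f²(c), …}`. -/
def PC (s : ℝ) : Set ℝ := Set.range fun n => (f s)^[n] (c s)

/-- The inverse limit, as a set of sequences: `x_i ∈ I` and `f(x_{i+1}) = x_i`. -/
def IhatSet (s : ℝ) : Set (ℕ → ℝ) :=
  {x | (∀ i, x i ∈ I) ∧ ∀ i, f s (x (i + 1)) = x i}

/-- The inverse limit space `Î`. -/
abbrev Ihat (s : ℝ) : Type := ↥(IhatSet s)

/-- The metric on `Î`: `d(x,y) = Σ_i |x_i − y_i|/2^i`. -/
def dHat (s : ℝ) (x y : Ihat s) : ℝ := ∑' i : ℕ, |x.1 i - y.1 i| / 2 ^ i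

/-- The shift map on sequences: `x ↦ (f(x₀), x₀, x₁, …)`. -/
def fhatSeq (s : ℝ) (x : ℕ → ℝ) : ℕ → ℝ := fun n => Nat.casesOn n (f s (x 0)) fun k => x k

/-- The image under `f̂ⁿ` of a subset of `Î`. -/
def fhatImage (s : ℝ) (n : ℕ) (K : Set (Ihat s)) : Set (Ihat s) :=
  {y : Ihat s | ∃ x ∈ K, y.1 = (fhatSeq s)^[n] (Subtype.val x)}

/-- The inverse `f̂⁻ⁿ` of the shift homeomorphism: drop the first `n` coordinates. -/
def fhatInv (s : ℝ) (n : ℕ) (x : Ihat s) : Ihat s :=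
  ⟨fun i => x.1 (i + n), fun i => x.2.1 (i + n), fun i => by
    show f s (x.1 (i + 1 + n)) = x.1 (i + n)
    rw [show i + 1 + n = i + n + 1 from by omega]
    exact x.2.2 (i + n)⟩

/-- `γ` is an arc in `Î`: homeomorphic to a nontrivial interval of `ℝ`. -/
def IsArc (s : ℝ) (γ : Set (Ihat s)) : Prop :=
  ∃ J : Set ℝ, J.OrdConnected ∧ J.Nontrivial ∧ Nonempty (γ ≃ₜ J)

/-- `γ` is a closed arc in `Î`: homeomorphic to `[0,1]`. -/
def IsClosedArc (s : ℝ) (γ : Set (Ihat s)) : Prop := Nonempty (γ ≃ₜ (Set.Icc (0:ℝ) 1))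

/-- `γ` is an open arc in `Î`: homeomorphic to `(0,1)`. -/
def IsOpenArc (s : ℝ) (γ : Set (Ihat s)) : Prop := Nonempty (γ ≃ₜ (Set.Ioo (0:ℝ) 1))

/-- `x` is an endpoint of the closed arc `γ`. -/
def IsEndpoint (s : ℝ) (x : Ihat s) (γ : Set (Ihat s)) : Prop :=
  ∃ (e : γ ≃ₜ (Set.Icc (0:ℝ) 1)) (hx : x ∈ γ), (e ⟨x, hx⟩).1 = 0 ∨ (e ⟨x, hx⟩).1 = 1

/-- `γ` is `m`-flat over the nontrivial interval `J ⊆ I`: the projection `π_m`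
restricted to `γ` is a homeomorphism onto `J`. -/
def MFlatOver (s : ℝ) (m : ℕ) (γ : Set (Ihat s)) (J : Set ℝ) : Prop :=
  J ⊆ I ∧ J.OrdConnected ∧ J.Nontrivial ∧
    ∃ e : γ ≃ₜ J, ∀ x : γ, (e x).1 = x.1.1 m

/-- `γ` is an `m`-flat arc. -/
def IsMFlat (s : ℝ) (m : ℕ) (γ : Set (Ihat s)) : Prop := ∃ J : Set ℝ, MFlatOver s m γ J

/-- `γ` is a flat arc: `m`-flat for some `m ≥ 0`. -/
def IsFlat (s : ℝ) (γ : Set (Ihat s)) : Prop := ∃ m : ℕ, IsMFlat s m γ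

/-- `γ` is a flat closed arc. -/
def IsFlatClosedArc (s : ℝ) (γ : Set (Ihat s)) : Prop := IsClosedArc s γ ∧ IsFlat s γ

/-- `p 0, …, p k` occur in order along the closed arc `γ` (from one endpoint to the other). -/
def InOrderAlong (s : ℝ) (γ : Set (Ihat s)) (k : ℕ) (p : ℕ → Ihat s) : Prop :=
  ∃ (e : γ ≃ₜ (Set.Icc (0:ℝ) 1)) (t : ℕ → Set.Icc (0:ℝ) 1),
    (∀ i j, i ≤ j → j ≤ k → t i ≤ t j) ∧ ∀ i ≤ k, (e.symm (t i)).1 = p i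

/-- The arclength of a closed arc `γ` in the metric `d`: the supremum over finite
sequences of points occurring in order along `γ` of the sums of successive distances. -/
def arcLength (s : ℝ) (γ : Set (Ihat s)) : ℝ≥0∞ :=
  ⨆ (k : ℕ) (p : ℕ → Ihat s) (_ : InOrderAlong s γ k p),
    ENNReal.ofReal (∑ i ∈ Finset.range k, dHat s (p i) (p (i + 1)))

/-- A continuum: a compact connected subset of `Î` with more than one point. -/
def IsContinuum (s : ℝ) (K : Set (Ihat s)) : Prop :=
  IsCompact K ∧ IsConnected K ∧ K.Nontrivial

/-- `K` is `ε`-dense in `Î`. -/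
def EpsDense (s : ℝ) (ε : ℝ) (K : Set (Ihat s)) : Prop :=
  ∀ x : Ihat s, ∃ y ∈ K, dHat s x y ≤ ε

/-- `S` is metrically infinite: contains flat closed arcs of arbitrarily large length. -/
def MetricallyInfinite (s : ℝ) (S : Set (Ihat s)) : Prop :=
  ∀ N : ℝ, 0 < N → ∃ γ : Set (Ihat s), γ ⊆ S ∧ IsFlatClosedArc s γ ∧
    ENNReal.ofReal N < arcLength s γ

/-- An arc is bi-dense if, for some point `p` in it, both connected components of
`γ ∖ {p}` are dense in `Î`. -/
def BiDense (s : ℝ) (γ : Set (Ihat s)) : Prop :=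
  ∃ p ∈ γ, ∀ q ∈ γ \ {p}, Dense (connectedComponentIn (γ \ {p}) q)

/-- An arc is metrically bi-infinite if, for some point `p` in it, both connected
components of `γ ∖ {p}` are metrically infinite. -/
def MetricallyBiInfinite (s : ℝ) (γ : Set (Ihat s)) : Prop :=
  ∃ p ∈ γ, ∀ q ∈ γ \ {p}, MetricallyInfinite s (connectedComponentIn (γ \ {p}) q)

/-- `x` is globally leaf regular: its path component is a bi-dense, metrically
bi-infinite open arc. -/
def GloballyLeafRegular (s : ℝ) (x : Ihat s) : Prop :=
  IsOpenArc s (pathComponent x) ∧ BiDense s (pathComponent x) ∧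
    MetricallyBiInfinite s (pathComponent x)

/-- A `0`-box over `J`: a union of arcs, each `0`-flat over `J`. -/
def ZeroBoxOver (s : ℝ) (B : Set (Ihat s)) (J : Set ℝ) : Prop :=
  ∃ A : Set (Set (Ihat s)), (∀ γ ∈ A, MFlatOver s 0 γ J) ∧ B = ⋃₀ A

/-- An `m`-box over `J`: `f̂⁻ᵐ(B)` is a `0`-box over `J`. -/
def MBoxOver (s : ℝ) (m : ℕ) (B : Set (Ihat s)) (J : Set ℝ) : Prop :=
  ZeroBoxOver s (fhatInv s m '' B) J

/-- The maximal `m`-box over `J`: the union of all arcs `m`-flat over `J`. -/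
def maximalMBox (s : ℝ) (m : ℕ) (J : Set ℝ) : Set (Ihat s) :=
  ⋃₀ {γ : Set (Ihat s) | MFlatOver s m γ J}

/-- The point cylinder `[y₀, …, y_n]`. -/
def pointCyl (s : ℝ) (y : ℕ → ℝ) (n : ℕ) : Set (Ihat s) :=
  {z : Ihat s | ∀ i ≤ n, z.1 i = y i}

/-! ### Auxiliary lemmas -/

section Aux

variable {s : ℝ}

lemma one_lt_of_sqrt (hs₁ : Real.sqrt 2 < s) : 1 < s := by
  have h : (1:ℝ) < Real.sqrt 2 := by
    rw [show (1:ℝ) = Real.sqrt 1 from Real.sqrt_one.symm]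
    exact Real.sqrt_lt_sqrt (by norm_num) (by norm_num)
  linarith

lemma sc (hs₁ : 1 < s) : s * c s = s - 1 := by
  have : s ≠ 0 := by linarith
  rw [c, mul_sub, mul_one, mul_one_div_cancel this]

lemma f_left (hs₁ : 1 < s) {x : ℝ} (hx : x ≤ c s) : f s x = s * x + 2 - s := by
  have h1 := sc hs₁
  apply min_eq_left
  nlinarith

lemma f_right (hs₁ : 1 < s) {x : ℝ} (hx : c s ≤ x) : f s x = s * (1 - x) := by
  have h1 := sc hs₁
  apply min_eq_right
  nlinarith

lemma f_c (hs₁ : 1 < s) : f s (c s) = 1 := by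
  rw [f_left hs₁ le_rfl, sc hs₁]; ring

lemma f_mem_I (hs₁ : 1 < s) (hs₂ : s < 2) {x : ℝ} (hx : x ∈ I) : f s x ∈ I := by
  obtain ⟨h0, h1⟩ := hx
  have h2 := sc hs₁
  constructor
  · apply le_min <;> nlinarith
  · rcases le_total x (c s) with h | h
    · rw [f_left hs₁ h]; nlinarith
    · rw [f_right hs₁ h]; nlinarith

lemma lipf (hs₁ : 1 < s) (a b : ℝ) : |f s a - f s b| ≤ s * |a - b| := by
  refine le_trans (abs_min_sub_min_le_max _ _ _ _) ?_
  have e1 : s * a + 2 - s - (s * b + 2 - s) = s * (a - b) := by ring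
  have e2 : s * (1 - a) - s * (1 - b) = s * (b - a) := by ring
  rw [e1, e2, abs_mul, abs_mul, abs_of_pos (by linarith : (0:ℝ) < s), abs_sub_comm b a]
  simp

lemma f_cont : Continuous (f s) := by
  apply Continuous.min <;> fun_prop

lemma expand (hs₁ : 1 < s) {K : Set ℝ} (hK : IsPreconnected K)
    {D : ℝ} (hD : 0 ≤ D)
    (hf : ∀ y ∈ K, ∀ z ∈ K, |f s y - f s z| ≤ D) :
    ∀ a ∈ K, ∀ b ∈ K, |a - b| ≤ 2 / s * D := by
  have hs0 : (0:ℝ) < s := by linarith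
  have hsc := sc hs₁
  suffices h : ∀ a ∈ K, ∀ b ∈ K, a ≤ b → b - a ≤ 2 / s * D by
    intro a ha b hb
    rcases le_total a b with hab | hab
    · rw [abs_of_nonpos (by linarith)]; simpa using h a ha b hb hab
    · rw [abs_of_nonneg (by linarith)]; exact h b hb a ha hab
  intro a ha b hb hab
  rcases le_total b (c s) with h | hcb
  · have := hf a ha b hb
    rw [f_left hs₁ (le_trans hab h), f_left hs₁ h,
      abs_of_nonpos (by nlinarith)] at this
    have h3 : s * (b - a) ≤ D := by linarith
    rw [div_mul_eq_mul_div, le_div_iff₀ hs0]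
    nlinarith
  rcases le_total (c s) a with h | hac
  · have := hf a ha b hb
    rw [f_right hs₁ h, f_right hs₁ (le_trans h hab),
      abs_of_nonneg (by nlinarith)] at this
    have h3 : s * (b - a) ≤ D := by linarith
    rw [div_mul_eq_mul_div, le_div_iff₀ hs0]
    nlinarith
  · have hc : c s ∈ K := hK.Icc_subset ha hb ⟨hac, hcb⟩
    have h1 := hf a ha (c s) hc
    have h2 := hf (c s) hc b hb
    rw [f_left hs₁ hac, f_c hs₁, abs_of_nonpos (by nlinarith)] at h1
    rw [f_c hs₁, f_right hs₁ hcb, abs_of_nonneg (by nlinarith)] at h2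
    rw [div_mul_eq_mul_div, le_div_iff₀ hs0]
    nlinarith

lemma clamp_mem (a : ℝ) : max 0 (min 1 a) ∈ Set.Icc (0:ℝ) 1 :=
  ⟨le_max_left _ _, max_le (by norm_num) (min_le_left _ _)⟩

lemma clamp_eq {a : ℝ} (h0 : 0 ≤ a) (h1 : a ≤ 1) : max 0 (min 1 a) = a := by
  rw [min_eq_right h1, max_eq_right h0]

lemma clamp_abs (a b : ℝ) : |max 0 (min 1 a) - max 0 (min 1 b)| ≤ |a - b| := by
  calc |max 0 (min 1 a) - max 0 (min 1 b)|
      ≤ max |(0:ℝ) - 0| |min 1 a - min 1 b| := abs_max_sub_max_le_max _ _ _ _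
    _ = |min 1 a - min 1 b| := by simp
    _ ≤ max |(1:ℝ) - 1| |a - b| := abs_min_sub_min_le_max _ _ _ _
    _ = |a - b| := by simp

lemma ihatSet_closed : IsClosed (IhatSet s) := by
  have h : IhatSet s = (⋂ i, {x : ℕ → ℝ | x i ∈ I}) ∩ ⋂ i, {x : ℕ → ℝ | f s (x (i+1)) = x i} := by
    ext x
    simp only [IhatSet, Set.mem_setOf_eq, Set.mem_inter_iff, Set.mem_iInter]
  rw [h]
  refine IsClosed.inter (isClosed_iInter fun i => ?_) (isClosed_iInter fun i => ?_)
  · exact (isClosed_Icc (a := (0:ℝ)) (b := 1)).preimage (continuous_apply i)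
  · exact isClosed_eq (f_cont.comp (continuous_apply (i+1))) (continuous_apply i)

lemma ihatSet_compact : IsCompact (IhatSet s) := by
  refine IsCompact.of_isClosed_subset (isCompact_pi_infinite fun i => isCompact_Icc (a := (0:ℝ)) (b := 1)) ihatSet_closed ?_
  intro x hx i
  exact hx.1 i

instance ihat_compactSpace : CompactSpace (Ihat s) :=
  isCompact_iff_compactSpace.mp ihatSet_compact

lemma closure_eq_Icc {J : Set ℝ} (hJI : J ⊆ I) (hJoc : J.OrdConnected) (hJnt : J.Nontrivial) :
    sInf J < sSup J ∧ closure J = Set.Icc (sInf J) (sSup J) := by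
  obtain ⟨x, hx, y, hy, hxy⟩ := hJnt
  have hbddb : BddBelow J := ⟨0, fun z hz => (hJI hz).1⟩
  have hbdd : BddAbove J := ⟨1, fun z hz => (hJI hz).2⟩
  have hJsub : J ⊆ Set.Icc (sInf J) (sSup J) := fun z hz => ⟨csInf_le hbddb hz, le_csSup hbdd hz⟩
  have hlt : sInf J < sSup J := by
    rcases hxy.lt_or_gt with h | h
    · exact lt_of_le_of_lt (csInf_le hbddb hx) (lt_of_lt_of_le h (le_csSup hbdd hy))
    · exact lt_of_le_of_lt (csInf_le hbddb hy) (lt_of_lt_of_le h (le_csSup hbdd hx))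
  refine ⟨hlt, le_antisymm (closure_minimal hJsub isClosed_Icc) ?_⟩
  rw [← closure_Ioo hlt.ne]
  apply closure_mono
  intro z hz
  obtain ⟨u, hu, huz⟩ := exists_lt_of_csInf_lt ⟨x, hx⟩ hz.1
  obtain ⟨v, hv, hvz⟩ := exists_lt_of_lt_csSup ⟨x, hx⟩ hz.2
  exact hJoc.out hu hv ⟨huz.le, hvz.le⟩

/-- The uniform Lipschitz constant for the `i`-th coordinate of an `m`-flat arc. -/
def Lr (s : ℝ) (m i : ℕ) : ℝ := (2*s)^(m+i)

lemma Lr_nonneg (hs₁ : 1 < s) (m i : ℕ) : 0 ≤ Lr s m i :=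
  pow_nonneg (by linarith) _

end Aux

section ArcExt

variable {s : ℝ}

lemma arcExt (hs₁ : 1 < s) {m : ℕ} {γ : Set (Ihat s)} {J : Set ℝ}
    (hγ : MFlatOver s m γ J) :
    ∃ H : ℕ × ℝ → ℝ,
      (∀ p, H p ∈ Set.Icc (0:ℝ) 1) ∧
      (∀ i, ∀ t ∈ closure J, f s (H (i+1, t)) = H (i, t)) ∧
      (∀ t ∈ closure J, H (m, t) = t) ∧
      (∀ i, ∀ t ∈ closure J, ∀ t' ∈ closure J, |H (i,t) - H (i,t')| ≤ Lr s m i * |t - t'|) ∧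
      (∀ t ∈ closure J, (fun i => H (i, t)) ∈ Subtype.val '' closure γ) ∧
      (∀ z : Ihat s, z ∈ γ → ∀ i, H (i, z.1 m) = z.1 i) := by
  classical
  obtain ⟨hJI, hJoc, hJnt, e, he⟩ := hγ
  have hs0 : (0:ℝ) < s := by linarith
  set G : ℕ → ℝ → ℝ :=
    fun i t => if h : t ∈ J then ((e.symm ⟨t, h⟩ : γ) : Ihat s).1 i else 0 with hGdef
  have hGJ : ∀ (i : ℕ) (t : ℝ) (ht : t ∈ J), G i t = ((e.symm ⟨t, ht⟩ : γ) : Ihat s).1 i := by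
    intro i t ht; simp only [hGdef, dif_pos ht]
  have hGI : ∀ i, ∀ t ∈ J, G i t ∈ I := by
    intro i t ht
    rw [hGJ i t ht]; exact ((e.symm ⟨t, ht⟩ : γ) : Ihat s).2.1 i
  have hGf : ∀ i, ∀ t ∈ J, f s (G (i+1) t) = G i t := by
    intro i t ht
    rw [hGJ _ t ht, hGJ _ t ht]; exact ((e.symm ⟨t, ht⟩ : γ) : Ihat s).2.2 i
  have hGm : ∀ t ∈ J, G m t = t := by
    intro t ht
    rw [hGJ m t ht]
    have h2 := he (e.symm ⟨t, ht⟩)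
    rw [e.apply_symm_apply] at h2
    exact h2.symm
  have hGz : ∀ (z : Ihat s), z ∈ γ → (z.1 m ∈ J) ∧ ∀ i, G i (z.1 m) = z.1 i := by
    intro z hz
    have h2 := he ⟨z, hz⟩
    have hmem : z.1 m ∈ J := h2 ▸ (e ⟨z, hz⟩).2
    refine ⟨hmem, fun i => ?_⟩
    rw [hGJ i _ hmem]
    have h3 : (⟨z.1 m, hmem⟩ : J) = e ⟨z, hz⟩ := Subtype.ext h2.symm
    rw [h3, e.symm_apply_apply]
  have hGc : ∀ i, ContinuousOn (G i) J := by
    intro i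
    rw [continuousOn_iff_continuous_restrict]
    have h2 : J.restrict (G i) = fun (τ : J) => ((e.symm τ : γ) : Ihat s).1 i := by
      funext τ
      exact dif_pos τ.2
    change Continuous (J.restrict (G i))
    rw [h2]
    exact (continuous_apply i).comp
      (continuous_subtype_val.comp (continuous_subtype_val.comp e.symm.continuous))
  -- the inductive expansion bound
  have key1 : ∀ k, ∀ t ∈ J, ∀ t' ∈ J, t ≤ t' →
      ∀ a ∈ G (m+k) '' Set.Icc t t', ∀ b ∈ G (m+k) '' Set.Icc t t',
        |a - b| ≤ (2/s)^k * (t' - t) := by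
    intro k
    induction k with
    | zero =>
      rintro t ht t' ht' htt a ⟨ta, hta, rfl⟩ b ⟨tb, htb, rfl⟩
      have h1 : G (m+0) ta = ta := hGm ta (hJoc.out ht ht' hta)
      have h2 : G (m+0) tb = tb := hGm tb (hJoc.out ht ht' htb)
      rw [h1, h2, pow_zero, one_mul, abs_sub_le_iff]
      constructor <;> linarith [hta.1, hta.2, htb.1, htb.2]
    | succ k ih =>
      intro t ht t' ht' htt
      have hseg : Set.Icc t t' ⊆ J := hJoc.out ht ht'
      have hpre : IsPreconnected (G (m+(k+1)) '' Set.Icc t t') :=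
        isPreconnected_Icc.image _ ((hGc (m+(k+1))).mono hseg)
      have hD : 0 ≤ (2/s)^k * (t' - t) :=
        mul_nonneg (pow_nonneg (by positivity) k) (by linarith)
      have hfK : ∀ y ∈ G (m+(k+1)) '' Set.Icc t t', ∀ z ∈ G (m+(k+1)) '' Set.Icc t t',
          |f s y - f s z| ≤ (2/s)^k * (t' - t) := by
        rintro y ⟨ty, hty, rfl⟩ z ⟨tz, htz, rfl⟩
        rw [show m + (k+1) = (m+k) + 1 from rfl, hGf (m+k) ty (hseg hty),
          hGf (m+k) tz (hseg htz)]
        exact ih t ht t' ht' htt _ ⟨ty, hty, rfl⟩ _ ⟨tz, htz, rfl⟩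
      intro a ha b hb
      calc |a - b| ≤ 2/s * ((2/s)^k * (t' - t)) := expand hs₁ hpre hD hfK a ha b hb
        _ = (2/s)^(k+1) * (t' - t) := by ring
  have key2 : ∀ k, ∀ t ∈ J, ∀ t' ∈ J, |G (m+k) t - G (m+k) t'| ≤ (2/s)^k * |t - t'| := by
    intro k t ht t' ht'
    rcases le_total t t' with h | h
    · rw [abs_of_nonpos (by linarith : t - t' ≤ 0), neg_sub]
      exact key1 k t ht t' ht' h _ ⟨t, ⟨le_rfl, h⟩, rfl⟩ _ ⟨t', ⟨h, le_rfl⟩, rfl⟩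
    · rw [abs_of_nonneg (by linarith : 0 ≤ t - t')]
      exact key1 k t' ht' t ht h _ ⟨t, ⟨h, le_rfl⟩, rfl⟩ _ ⟨t', ⟨le_rfl, h⟩, rfl⟩
  have key3 : ∀ j, ∀ t ∈ J, ∀ t' ∈ J, |G (m-j) t - G (m-j) t'| ≤ s^j * |t - t'| := by
    intro j
    induction j with
    | zero =>
      intro t ht t' ht'
      rw [Nat.sub_zero, hGm t ht, hGm t' ht', pow_zero, one_mul]
    | succ j ih =>
      by_cases hj : j < m
      · have h1 : m - (j+1) + 1 = m - j := by omega
        intro t ht t' ht'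
        calc |G (m-(j+1)) t - G (m-(j+1)) t'|
            = |f s (G (m-(j+1)+1) t) - f s (G (m-(j+1)+1) t')| := by
              rw [hGf _ t ht, hGf _ t' ht']
          _ ≤ s * |G (m-(j+1)+1) t - G (m-(j+1)+1) t'| := lipf hs₁ _ _
          _ = s * |G (m-j) t - G (m-j) t'| := by rw [h1]
          _ ≤ s * (s^j * |t - t'|) :=
              mul_le_mul_of_nonneg_left (ih t ht t' ht') (le_of_lt hs0)
          _ = s^(j+1) * |t - t'| := by ring
      · have h1 : m - (j+1) = m - j := by omega
        intro t ht t' ht'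
        rw [h1]
        refine le_trans (ih t ht t' ht') (mul_le_mul_of_nonneg_right ?_ (abs_nonneg _))
        exact pow_le_pow_right₀ (by linarith) (Nat.le_succ j)
  have keyAll : ∀ i, ∀ t ∈ J, ∀ t' ∈ J, |G i t - G i t'| ≤ Lr s m i * |t - t'| := by
    intro i t ht t' ht'
    have h2s : (1:ℝ) ≤ 2*s := by linarith
    rcases le_or_gt m i with him | him
    · obtain ⟨k, rfl⟩ := Nat.exists_eq_add_of_le him
      refine le_trans (key2 k t ht t' ht') (mul_le_mul_of_nonneg_right ?_ (abs_nonneg _))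
      unfold Lr
      calc (2/s)^k ≤ (2*s)^k :=
            pow_le_pow_left₀ (by positivity) (by rw [div_le_iff₀ hs0]; nlinarith) k
        _ ≤ (2*s)^(m+(m+k)) := pow_le_pow_right₀ h2s (by omega)
    · have e1 : m - (m - i) = i := by omega
      have h3 := key3 (m-i) t ht t' ht'
      rw [e1] at h3
      refine le_trans h3 (mul_le_mul_of_nonneg_right ?_ (abs_nonneg _))
      unfold Lr
      calc s^(m-i) ≤ (2*s)^(m-i) := pow_le_pow_left₀ (le_of_lt hs0) (by linarith) _
        _ ≤ (2*s)^(m+i) := pow_le_pow_right₀ h2s (by omega)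
  have hLip : ∀ i, LipschitzOnWith (Real.toNNReal (Lr s m i)) (G i) J := by
    intro i
    rw [lipschitzOnWith_iff_dist_le_mul]
    intro x hx y hy
    rw [Real.dist_eq, Real.dist_eq, Real.coe_toNNReal _ (Lr_nonneg hs₁ m i)]
    exact keyAll i x hx y hy
  choose g hg1 hg2 using fun i => (hLip i).extend_real
  refine ⟨fun p => max 0 (min 1 (g p.1 p.2)), fun p => clamp_mem _, ?_, ?_, ?_, ?_, ?_⟩
  · -- functional equation on closure J
    intro i
    have hHc : ∀ j : ℕ, Continuous fun t : ℝ => max 0 (min 1 (g j t)) :=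
      fun j => continuous_const.max (continuous_const.min (hg1 j).continuous)
    refine Set.EqOn.closure (fun t ht => ?_) (f_cont.comp (hHc (i+1))) (hHc i)
    have h1 : ∀ j : ℕ, max 0 (min 1 (g j t)) = G j t := fun j => by
      rw [← hg2 j ht, clamp_eq (hGI j t ht).1 (hGI j t ht).2]
    simp only [h1]
    exact hGf i t ht
  · -- m-th coordinate is the identity on closure J
    have hHc : Continuous fun t : ℝ => max 0 (min 1 (g m t)) :=
      continuous_const.max (continuous_const.min (hg1 m).continuous)
    refine Set.EqOn.closure (fun t ht => ?_) hHc continuous_id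
    show max 0 (min 1 (g m t)) = t
    rw [← hg2 m ht, clamp_eq (hGI m t ht).1 (hGI m t ht).2]
    exact hGm t ht
  · -- Lipschitz bound
    intro i t _ t' _
    have h1 : |g i t - g i t'| ≤ Lr s m i * |t - t'| := by
      have h2 := (hg1 i).dist_le_mul t t'
      rwa [Real.dist_eq, Real.dist_eq, Real.coe_toNNReal _ (Lr_nonneg hs₁ m i)] at h2
    exact le_trans (clamp_abs _ _) h1
  · -- membership in the closure of the arc
    intro t ht
    have hψc : Continuous fun t : ℝ => (fun i => max 0 (min 1 (g i t))) :=
      continuous_pi fun i => continuous_const.max (continuous_const.min (hg1 i).continuous)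
    have hsub : (fun t : ℝ => (fun i => max 0 (min 1 (g i t)))) '' J ⊆ Subtype.val '' γ := by
      rintro _ ⟨u, hu, rfl⟩
      refine ⟨(e.symm ⟨u, hu⟩ : γ), (e.symm ⟨u, hu⟩).2, ?_⟩
      funext i
      show ((e.symm ⟨u, hu⟩ : γ) : Ihat s).1 i = max 0 (min 1 (g i u))
      rw [← hg2 i hu, clamp_eq (hGI i u hu).1 (hGI i u hu).2, hGJ i u hu]
  -- goal: val (e.symm ..) = fun i => ...
    have h3 : closure ((fun t : ℝ => (fun i => max 0 (min 1 (g i t)))) '' J)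
        ⊆ closure (Subtype.val '' γ) := closure_mono hsub
    have h4 : closure (Subtype.val '' γ) = Subtype.val '' closure γ :=
      (Topology.IsClosedEmbedding.subtypeVal ihatSet_closed).closure_image_eq γ
    exact h4 ▸ h3 (image_closure_subset_closure_image hψc ⟨t, ht, rfl⟩)
  · -- agreement with points of the arc
    intro z hz i
    obtain ⟨hmem, hval⟩ := hGz z hz
    show max 0 (min 1 (g i (z.1 m))) = z.1 i
    rw [← hg2 i hmem, clamp_eq (hGI i _ hmem).1 (hGI i _ hmem).2]
    exact hval i

end ArcExt

section Shift

variable {s : ℝ}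

lemma fhatSeq_mem (hs₁ : 1 < s) (hs₂ : s < 2) {y : ℕ → ℝ} (hy : y ∈ IhatSet s) :
    fhatSeq s y ∈ IhatSet s := by
  constructor
  · intro i
    cases i with
    | zero => exact f_mem_I hs₁ hs₂ (hy.1 0)
    | succ k => exact hy.1 k
  · intro i
    cases i with
    | zero => rfl
    | succ k => exact hy.2 k

lemma fhatSeq_iter_mem (hs₁ : 1 < s) (hs₂ : s < 2) {y : ℕ → ℝ} (hy : y ∈ IhatSet s) :
    ∀ n, (fhatSeq s)^[n] y ∈ IhatSet s := by
  intro n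
  induction n with
  | zero => simpa using hy
  | succ n ih =>
    rw [Function.iterate_succ_apply']
    exact fhatSeq_mem hs₁ hs₂ ih

lemma seq_fwd_drop {x : ℕ → ℝ} (hx : ∀ i, f s (x (i+1)) = x i) :
    ∀ n, (fhatSeq s)^[n] (fun i => x (i + n)) = x := by
  intro n
  induction n with
  | zero => funext i; simp
  | succ n ih =>
    rw [Function.iterate_succ_apply]
    have h1 : fhatSeq s (fun i => x (i + (n+1))) = fun i => x (i + n) := by
      funext i
      cases i with
      | zero =>
        show f s (x (0 + (n+1))) = x (0 + n)
        rw [show 0 + (n+1) = n + 1 by omega, show 0 + n = n by omega]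
        exact hx n
      | succ k =>
        show x (k + (n+1)) = x (k + 1 + n)
        congr 1
        omega
    rw [h1, ih]

lemma fwd_drop_coord : ∀ (n : ℕ) (y : ℕ → ℝ) (i : ℕ), (fhatSeq s)^[n] y (i + n) = y i := by
  intro n
  induction n with
  | zero => intro y i; simp
  | succ n ih =>
    intro y i
    rw [Function.iterate_succ_apply, show i + (n+1) = (i+1) + n by omega,
      ih (fhatSeq s y) (i+1)]
    rfl

lemma fhatSeq_cont : ∀ k, Continuous fun y : ℕ → ℝ => (fhatSeq s)^[k] y := by
  intro k
  induction k with
  | zero => exact continuous_id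
  | succ k ih =>
    have hone : Continuous fun y : ℕ → ℝ => fhatSeq s y := by
      apply continuous_pi
      intro j
      cases j with
      | zero => exact f_cont.comp (continuous_apply 0)
      | succ k2 => exact continuous_apply k2
    simp only [Function.iterate_succ_apply]
    exact ih.comp hone

/-- The `n`-fold shift `f̂⁻ⁿ` as a homeomorphism of `Î`. -/
def shiftHomeo (hs₁ : 1 < s) (hs₂ : s < 2) (n : ℕ) : Ihat s ≃ₜ Ihat s where
  toFun := fhatInv s n
  invFun x := ⟨(fhatSeq s)^[n] x.1, fhatSeq_iter_mem hs₁ hs₂ x.2 n⟩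
  left_inv x := Subtype.ext (seq_fwd_drop x.2.2 n)
  right_inv x := Subtype.ext (funext fun i => fwd_drop_coord n x.1 i)
  continuous_toFun := by
    apply Continuous.subtype_mk
    exact continuous_pi fun i => (continuous_apply (i+n)).comp continuous_subtype_val
  continuous_invFun := by
    apply Continuous.subtype_mk
    exact (fhatSeq_cont n).comp continuous_subtype_val

lemma mbox_decomp (hs₁ : 1 < s) (hs₂ : s < 2) {m : ℕ} {B : Set (Ihat s)} {J : Set ℝ}
    (hB : MBoxOver s m B J) :
    ∀ x ∈ B, ∃ γ, MFlatOver s m γ J ∧ x ∈ γ ∧ γ ⊆ B := by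
  obtain ⟨A₀, hA₀, hU⟩ := hB
  intro x hx
  set Ψ := shiftHomeo hs₁ hs₂ m with hΨdef
  have hΨ : ∀ z : Ihat s, Ψ z = fhatInv s m z := fun z => rfl
  have hx0 : fhatInv s m x ∈ ⋃₀ A₀ := by
    rw [← hU]; exact Set.mem_image_of_mem _ hx
  obtain ⟨γ₀, hγ₀A, hxγ₀⟩ := hx0
  refine ⟨⇑Ψ ⁻¹' γ₀, ?_, hxγ₀, ?_⟩
  · obtain ⟨hJI, hJoc, hJnt, e₀, he₀⟩ := hA₀ γ₀ hγ₀A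
    refine ⟨hJI, hJoc, hJnt, ?_⟩
    have himg : Ψ '' (⇑Ψ ⁻¹' γ₀) = γ₀ := Set.image_preimage_eq γ₀ Ψ.surjective
    refine ⟨((Ψ.image (⇑Ψ ⁻¹' γ₀)).trans (Homeomorph.setCongr himg)).trans e₀, ?_⟩
    intro z
    show (e₀ ⟨Ψ z.1, z.2⟩).1 = z.1.1 m
    rw [he₀ ⟨Ψ z.1, z.2⟩]
    show z.1.1 (0 + m) = z.1.1 m
    rw [Nat.zero_add]
  · intro z hz
    have h3 : Ψ z ∈ fhatInv s m '' B := by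
      rw [hU]; exact ⟨γ₀, hγ₀A, hz⟩
    obtain ⟨b, hb, hbeq⟩ := h3
    have : b = z := Ψ.injective (by rw [hΨ b, hbeq])
    exact this ▸ hb

end Shift

section Key

variable {s : ℝ}

lemma flat_coord_mem {m : ℕ} {γ : Set (Ihat s)} {J : Set ℝ}
    (hγ : MFlatOver s m γ J) {z : Ihat s} (hz : z ∈ γ) : z.1 m ∈ J := by
  obtain ⟨_, _, _, e, he⟩ := hγ
  have h1 := he ⟨z, hz⟩
  exact h1 ▸ (e ⟨z, hz⟩).2

lemma key (hs₁ : 1 < s) (hs₂ : s < 2) (m : ℕ) (J : Set ℝ) (B : Set (Ihat s))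
    (hJI : J ⊆ I) (hJoc : J.OrdConnected) (hJnt : J.Nontrivial)
    (hdec : ∀ x ∈ B, ∃ γ, MFlatOver s m γ J ∧ x ∈ γ ∧ γ ⊆ B) :
    (∀ γ ∈ {γ : Set (Ihat s) | (IsClosedArc s γ ∧ MFlatOver s m γ (closure J)) ∧ γ ⊆ closure B},
        (IsClosedArc s γ ∧ MFlatOver s m γ (closure J)) ∧ γ ⊆ closure B) ∧
    closure B = ⋃₀ {γ : Set (Ihat s) | (IsClosedArc s γ ∧ MFlatOver s m γ (closure J)) ∧ γ ⊆ closure B} := by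
  classical
  obtain ⟨hab, hcJ⟩ := closure_eq_Icc hJI hJoc hJnt
  have hcJI : closure J ⊆ I := closure_minimal hJI isClosed_Icc
  refine ⟨fun γ hγ => hγ, ?_⟩
  apply le_antisymm
  swap
  · exact Set.sUnion_subset fun γ hγ => hγ.2
  intro x hx
  -- extract an approximating sequence through flat arcs
  obtain ⟨u, hu, hul⟩ := mem_closure_iff_seq_limit.mp hx
  choose γn hγn hxn hγnB using fun n => hdec (u n) (hu n)
  choose H hH using fun n => arcExt hs₁ (hγn n)
  set S : Set (ℕ × ℝ → ℝ) :=
    {h | (∀ p, h p ∈ Set.Icc (0:ℝ) 1) ∧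
      (∀ i, ∀ t ∈ closure J, f s (h (i+1, t)) = h (i, t)) ∧
      (∀ t ∈ closure J, h (m, t) = t) ∧
      (∀ i, ∀ t ∈ closure J, ∀ t' ∈ closure J, |h (i,t) - h (i,t')| ≤ Lr s m i * |t - t'|) ∧
      (∀ t ∈ closure J, (fun i => h (i, t)) ∈ Subtype.val '' closure B)} with hSdef
  have hmemS : ∀ n, H n ∈ S := by
    intro n
    obtain ⟨h1, h2, h3, h4, h5, _⟩ := hH n
    refine ⟨h1, h2, h3, h4, fun t ht => ?_⟩
    exact Set.image_mono (closure_mono (hγnB n)) (h5 t ht)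
  have hvalclosed : IsClosed (Subtype.val '' closure B) :=
    ((isClosed_closure (s := B)).isCompact.image continuous_subtype_val).isClosed
  have hSclosed : IsClosed S := by
    have hrep : S = {h : ℕ × ℝ → ℝ | ∀ p, h p ∈ Set.Icc (0:ℝ) 1} ∩
        ((⋂ i, ⋂ t ∈ closure J, {h : ℕ × ℝ → ℝ | f s (h (i+1, t)) = h (i, t)}) ∩
        ((⋂ t ∈ closure J, {h : ℕ × ℝ → ℝ | h (m, t) = t}) ∩
        ((⋂ i, ⋂ t ∈ closure J, ⋂ t' ∈ closure J,
            {h : ℕ × ℝ → ℝ | |h (i,t) - h (i,t')| ≤ Lr s m i * |t - t'|}) ∩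
        (⋂ t ∈ closure J, {h : ℕ × ℝ → ℝ |
            (fun i => h (i, t)) ∈ Subtype.val '' closure B})))) := by
      ext h
      simp only [hSdef, Set.mem_setOf_eq, Set.mem_inter_iff, Set.mem_iInter]
    rw [hrep]
    refine IsClosed.inter ?_ (IsClosed.inter ?_ (IsClosed.inter ?_ (IsClosed.inter ?_ ?_)))
    · have : {h : ℕ × ℝ → ℝ | ∀ p, h p ∈ Set.Icc (0:ℝ) 1}
          = ⋂ p, {h : ℕ × ℝ → ℝ | h p ∈ Set.Icc (0:ℝ) 1} := by
        ext h; simp [Set.mem_iInter]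
      rw [this]
      exact isClosed_iInter fun p => isClosed_Icc.preimage (continuous_apply p)
    · exact isClosed_iInter fun i => isClosed_biInter fun t _ =>
        isClosed_eq (f_cont.comp (continuous_apply ((i+1), t))) (continuous_apply (i, t))
    · exact isClosed_biInter fun t _ => isClosed_eq (continuous_apply (m, t)) continuous_const
    · exact isClosed_iInter fun i => isClosed_biInter fun t _ => isClosed_biInter fun t' _ =>
        isClosed_le (((continuous_apply (i, t)).sub (continuous_apply (i, t'))).abs)
          continuous_const
    · exact isClosed_biInter fun t _ =>
        hvalclosed.preimage (continuous_pi fun i => continuous_apply (i, t))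
  have hScomp : IsCompact S := by
    refine IsCompact.of_isClosed_subset
      (isCompact_pi_infinite fun p : ℕ × ℝ => isCompact_Icc (a := (0:ℝ)) (b := 1))
      hSclosed ?_
    intro h hh
    exact hh.1
  have hle : Filter.map H Filter.atTop ≤ Filter.principal S :=
    Filter.le_principal_iff.mpr (Filter.mem_map.mpr (Filter.univ_mem' hmemS))
  obtain ⟨h, hhS, hcl⟩ := hScomp.exists_clusterPt hle
  -- coordinates of x
  set t : ℝ := x.1 m with htdef
  set tn : ℕ → ℝ := fun n => (u n).1 m with htndef
  have htnJ : ∀ n, tn n ∈ J := fun n => flat_coord_mem (hγn n) (hxn n)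
  have hcoordconv : ∀ i : ℕ, Filter.Tendsto (fun n => (u n).1 i) Filter.atTop (𝓝 (x.1 i)) := by
    intro i
    exact (((continuous_apply i).comp continuous_subtype_val).tendsto x).comp hul
  have htn : Filter.Tendsto tn Filter.atTop (𝓝 t) := hcoordconv m
  have htcJ : t ∈ closure J :=
    mem_closure_of_tendsto htn (Filter.Eventually.of_forall htnJ)
  have hcoord : ∀ i, h (i, t) = x.1 i := by
    intro i
    have heqn : ∀ n, H n (i, tn n) = (u n).1 i := fun n => (hH n).2.2.2.2.2 (u n) (hxn n) i
    have hlim : Filter.Tendsto (fun n => H n (i, t)) Filter.atTop (𝓝 (x.1 i)) := by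
      rw [tendsto_iff_dist_tendsto_zero]
      have hbound : ∀ n, dist (H n (i, t)) (x.1 i)
          ≤ Lr s m i * dist t (tn n) + dist ((u n).1 i) (x.1 i) := by
        intro n
        refine le_trans (dist_triangle _ (H n (i, tn n)) _) ?_
        gcongr
        · have h4 := (hH n).2.2.2.1 i t htcJ (tn n) (subset_closure (htnJ n))
          rw [Real.dist_eq, Real.dist_eq]
          exact h4
        · rw [heqn n]
      have hz1 : Filter.Tendsto (fun n => Lr s m i * dist t (tn n) + dist ((u n).1 i) (x.1 i))
          Filter.atTop (𝓝 0) := by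
        have ha : Filter.Tendsto (fun n => dist t (tn n)) Filter.atTop (𝓝 0) := by
          have := htn
          rw [tendsto_iff_dist_tendsto_zero] at this
          simpa [dist_comm] using this
        have hb : Filter.Tendsto (fun n => dist ((u n).1 i) (x.1 i)) Filter.atTop (𝓝 0) := by
          have := hcoordconv i
          rwa [tendsto_iff_dist_tendsto_zero] at this
        have := (ha.const_mul (Lr s m i)).add hb
        simpa using this
      exact tendsto_of_tendsto_of_tendsto_of_le_of_le tendsto_const_nhds hz1
        (fun n => dist_nonneg) hbound
    have hclh : ClusterPt (h (i, t)) (Filter.map (fun n => H n (i, t)) Filter.atTop) := by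
      have h2 := hcl.map (continuous_apply (i, t)).continuousAt
        (Filter.tendsto_map (f := fun h : ℕ × ℝ → ℝ => h (i, t)))
      rwa [Filter.map_map] at h2
    have h3 : ClusterPt (h (i, t)) (𝓝 (x.1 i)) := hclh.mono hlim
    exact t2_iff_nhds.mp inferInstance h3
  -- unpack membership of h in S
  obtain ⟨hS1, hS2, hS3, hS4, hS5⟩ := hhS
  have hIh : ∀ t' ∈ closure J, (fun i => h (i, t')) ∈ IhatSet s := by
    intro t' ht'
    exact ⟨fun i => hS1 (i, t'), fun i => hS2 i t' ht'⟩
  set γx : Set (Ihat s) := {z : Ihat s | ∃ t' ∈ closure J, ∀ i, z.1 i = h (i, t')} with hγxdef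
  have hxγx : x ∈ γx := ⟨t, htcJ, fun i => (hcoord i).symm⟩
  have hγxB : γx ⊆ closure B := by
    rintro z ⟨t', ht', hzi⟩
    obtain ⟨w, hwB, hwv⟩ := hS5 t' ht'
    have : z = w := Subtype.ext (by
      funext i
      rw [hzi i]
      exact (congrFun hwv i).symm)
    exact this ▸ hwB
  -- the homeomorphism onto `closure J`
  have hφcont : ∀ i : ℕ, Continuous fun τ : closure J => h (i, τ.1) := by
    intro i
    refine LipschitzWith.continuous (K := Real.toNNReal (Lr s m i))
      (LipschitzWith.of_dist_le_mul fun τ τ' => ?_)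
    rw [Subtype.dist_eq, Real.dist_eq, Real.dist_eq,
      Real.coe_toNNReal _ (Lr_nonneg hs₁ m i)]
    exact hS4 i τ.1 τ.2 τ'.1 τ'.2
  let eArc : γx ≃ₜ (closure J) :=
    { toFun := fun z => ⟨z.1.1 m, by
        obtain ⟨t', ht', hzi⟩ := z.2
        rw [hzi m, hS3 t' ht']
        exact ht'⟩
      invFun := fun τ => ⟨⟨fun i => h (i, τ.1), hIh τ.1 τ.2⟩, ⟨τ.1, τ.2, fun i => rfl⟩⟩
      left_inv := fun z => by
        apply Subtype.ext
        apply Subtype.ext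
        funext i
        show h (i, z.1.1 m) = z.1.1 i
        obtain ⟨t', ht', hzi⟩ := z.2
        rw [hzi m, hS3 t' ht', hzi i]
      right_inv := fun τ => Subtype.ext (hS3 τ.1 τ.2)
      continuous_toFun := by
        apply Continuous.subtype_mk
        exact (continuous_apply m).comp (continuous_subtype_val.comp continuous_subtype_val)
      continuous_invFun := by
        apply Continuous.subtype_mk
        apply Continuous.subtype_mk
        exact continuous_pi fun i => hφcont i }
  have hflat : MFlatOver s m γx (closure J) := by
    refine ⟨hcJI, ?_, ?_, eArc, fun z => rfl⟩
    · rw [hcJ]; exact Set.ordConnected_Icc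
    · rw [hcJ]
      exact ⟨sInf J, ⟨le_rfl, hab.le⟩, sSup J, ⟨hab.le, le_rfl⟩, hab.ne⟩
  have hclosed : IsClosedArc s γx := by
    refine ⟨eArc.trans ((Homeomorph.setCongr hcJ).trans ?_)⟩
    exact iccHomeoI (sInf J) (sSup J) hab
  exact ⟨γx, ⟨⟨hclosed, hflat⟩, hγxB⟩, hxγx⟩

end Key

/-- the closure of an `m`-box over `J` is an `m`-box over the closure
of `J`, all of whose constituent arcs are closed arcs; in particular the maximal
`m`-box over a closed interval is closed in `Î`. -/
theorem closure_of_box (s : ℝ) (hs₁ : Real.sqrt 2 < s) (hs₂ : s < 2) :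
    (∀ (m : ℕ) (J : Set ℝ) (B : Set (Ihat s)), J ⊆ I → J.OrdConnected →
      J.Nontrivial → MBoxOver s m B J →
      ∃ A : Set (Set (Ihat s)),
        (∀ γ ∈ A, IsClosedArc s γ ∧ MFlatOver s m γ (closure J)) ∧
        closure B = ⋃₀ A) ∧
    ∀ (m : ℕ) (a b : ℝ), a < b → Set.Icc a b ⊆ I →
      IsClosed (maximalMBox s m (Set.Icc a b)) := by
  have hs1 : 1 < s := one_lt_of_sqrt hs₁
  constructor
  · intro m J B hJI hJoc hJnt hB
    have hdec := mbox_decomp hs1 hs₂ hB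
    obtain ⟨_, hEq⟩ := key hs1 hs₂ m J B hJI hJoc hJnt hdec
    exact ⟨_, fun γ hγ => hγ.1, hEq⟩
  · intro m a b hab hsubI
    have hJoc : (Set.Icc a b).OrdConnected := Set.ordConnected_Icc
    have hJnt : (Set.Icc a b).Nontrivial :=
      ⟨a, ⟨le_rfl, hab.le⟩, b, ⟨hab.le, le_rfl⟩, hab.ne⟩
    have hdec : ∀ x ∈ maximalMBox s m (Set.Icc a b), ∃ γ, MFlatOver s m γ (Set.Icc a b) ∧
        x ∈ γ ∧ γ ⊆ maximalMBox s m (Set.Icc a b) := by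
      intro x hx
      obtain ⟨γ, hγ, hxγ⟩ := hx
      exact ⟨γ, hγ, hxγ, fun z hz => ⟨γ, hγ, hz⟩⟩
    obtain ⟨_, hEq⟩ := key hs1 hs₂ m (Set.Icc a b) (maximalMBox s m (Set.Icc a b))
      hsubI hJoc hJnt hdec
    apply isClosed_of_closure_subset
    rw [hEq]
    refine Set.sUnion_subset fun γ hγ => ?_
    intro z hz
    have hflat : MFlatOver s m γ (closure (Set.Icc a b)) := hγ.1.2
    have hcc : closure (Set.Icc a b) = Set.Icc a b := IsClosed.closure_eq isClosed_Icc
    rw [hcc] at hflat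
    exact ⟨γ, hflat, hz⟩

end Tent
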